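/- Let T be a coisometry on K, V a left invertible contraction on H, and X a bounded operator from H to K. If the equation X = TZ - ZV has a bounded solution Z, then X can be decomposed as X = A + F with A, F bounded, satisfying sup_n ||∑_{j=0}^{n} T*^{j+1} A V^{j}|| < ∞ and TF = 0. Specifically one may take F = -(I - T*T)ZV and A = TZ - T*TZV. -/
import Mathlib


open ContinuousLinearMap

variable {K H : Type*}
  [NormedAddCommGroup K] [InnerProductSpace ℂ K] [CompleteSpace K]
  [NormedAddCommGroup H] [InnerProductSpace ℂ H] [CompleteSpace H]

/-- The block operator matrix `[[T, X], [0, V]]` on the Hilbert space direct sum `K ⊕₂ H`. -/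
noncomputable def blockOp (T : K →L[ℂ] K) (X : H →L[ℂ] K) (V : H →L[ℂ] H) :
    WithLp 2 (K × H) →L[ℂ] WithLp 2 (K × H) :=
  ((WithLp.prodContinuousLinearEquiv 2 ℂ K H).symm : K × H →L[ℂ] WithLp 2 (K × H)) ∘L
    ((T ∘L fst ℂ K H + X ∘L snd ℂ K H).prod (V ∘L snd ℂ K H)) ∘L
    ((WithLp.prodContinuousLinearEquiv 2 ℂ K H) : WithLp 2 (K × H) →L[ℂ] K × H)

/-- An operator is similar to a contraction if some conjugate of it by a bounded invertible
operator has norm at most `1`. -/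
def SimilarToContraction {E : Type*} [NormedAddCommGroup E] [NormedSpace ℂ E]
    (S : E →L[ℂ] E) : Prop :=
  ∃ L : E ≃L[ℂ] E, ‖(L.symm : E →L[ℂ] E) ∘L S ∘L (L : E →L[ℂ] E)‖ ≤ 1

/-- for `T` a coisometry, `V` a left invertible contraction and `Z` a bounded
solution of `X = TZ - ZV`, the operator `X` decomposes as `X = A + F` with
`sup_n ‖∑ T*^(j+1) A V^j‖ < ∞` and `T F = 0`; one may take `F = -(I - T*T) Z V`
and `A = TZ - T*T Z V`. -/
theorem stmt6 (T : K →L[ℂ] K) (hT : T ∘L adjoint T = 1)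
    (V : H →L[ℂ] H) (hVc : ‖V‖ ≤ 1) (hVl : ∃ L : H →L[ℂ] H, L ∘L V = 1)
    (X Z : H →L[ℂ] K) (hZ : X = T ∘L Z - Z ∘L V) :
    ∃ A F : H →L[ℂ] K, X = A + F ∧
      (∃ M : ℝ, ∀ n : ℕ,
        ‖∑ j ∈ Finset.range (n + 1), ((adjoint T) ^ (j + 1)) ∘L A ∘L (V ^ j)‖ ≤ M) ∧
      T ∘L F = 0 ∧
      F = -((1 - adjoint T ∘L T) ∘L Z ∘L V) ∧
      A = T ∘L Z - adjoint T ∘L T ∘L Z ∘L V := by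
  refine ⟨T ∘L Z - adjoint T ∘L T ∘L Z ∘L V, -((1 - adjoint T ∘L T) ∘L Z ∘L V),
    ?_, ?_, ?_, rfl, rfl⟩
  · rw [hZ]; ext x
    simp [sub_apply, comp_apply]
  · -- the telescoping sum bound
    set S := adjoint T with hSdef
    have hTS : ∀ y : K, T (S y) = y := fun y => by
      have := ContinuousLinearMap.ext_iff.mp hT y
      simpa using this
    set D : H →L[ℂ] K := S ∘L T ∘L Z with hDdef
    set f : ℕ → (H →L[ℂ] K) := fun j => (S ^ j) ∘L D ∘L (V ^ j) with hfdef
    have hterm : ∀ j : ℕ,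
        (S ^ (j + 1)) ∘L (T ∘L Z - S ∘L T ∘L Z ∘L V) ∘L (V ^ j) = f j - f (j + 1) := by
      intro j
      have hcomm : ∀ y : H, (V ^ j) (V y) = V ((V ^ j) y) := fun y => by
        simpa [mul_apply] using
          congrArg (fun W : H →L[ℂ] H => W y) ((pow_succ V j).symm.trans (pow_succ' V j))
      ext x
      simp [hfdef, hDdef, pow_succ, sub_apply, comp_apply, mul_apply, map_sub, hcomm]
    have hsum : ∀ n : ℕ,
        ∑ j ∈ Finset.range (n + 1), (S ^ (j + 1)) ∘L (T ∘L Z - S ∘L T ∘L Z ∘L V) ∘L (V ^ j)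
          = f 0 - f (n + 1) := by
      intro n
      rw [Finset.sum_congr rfl fun j _ => hterm j]
      exact Finset.sum_range_sub' f (n + 1)
    have hS1 : ‖S‖ ≤ 1 := by
      have h1 : adjoint S ∘L S = 1 := by rw [hSdef, adjoint_adjoint]; exact hT
      have h2 : ‖adjoint S ∘L S‖ = ‖S‖ * ‖S‖ := norm_adjoint_comp_self S
      rw [h1] at h2
      have h3 : ‖(1 : K →L[ℂ] K)‖ ≤ 1 := by
        rw [ContinuousLinearMap.one_def]; exact norm_id_le
      nlinarith [norm_nonneg S]
    refine ⟨2 * ‖D‖, fun n => ?_⟩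
    rw [hsum n]
    have hf0 : f 0 = D := by ext x; simp [hfdef]
    have hfn : ‖f (n + 1)‖ ≤ ‖D‖ := by
      calc ‖f (n + 1)‖ ≤ ‖S ^ (n + 1)‖ * ‖D ∘L V ^ (n + 1)‖ := opNorm_comp_le _ _
        _ ≤ ‖S ^ (n + 1)‖ * (‖D‖ * ‖V ^ (n + 1)‖) := by
            gcongr; exact opNorm_comp_le _ _
        _ ≤ 1 * (‖D‖ * 1) := by
            gcongr
            · exact le_trans (norm_pow_le' S n.succ_pos) (pow_le_one₀ (norm_nonneg S) hS1)
            · exact le_trans (norm_pow_le' V n.succ_pos) (pow_le_one₀ (norm_nonneg V) hVc)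
        _ = ‖D‖ := by ring
    calc ‖f 0 - f (n + 1)‖ ≤ ‖f 0‖ + ‖f (n + 1)‖ := norm_sub_le _ _
      _ ≤ ‖D‖ + ‖D‖ := by rw [hf0]; gcongr
      _ = 2 * ‖D‖ := by ring
  · have hTS : ∀ y : K, T (adjoint T y) = y := fun y => by
      have := ContinuousLinearMap.ext_iff.mp hT y
      simpa using this
    ext x
    simp [comp_apply, hTS]
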